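/- Let α_1, …, α_ℓ ∈ ℝ^n with ℓ ≥ 1, let N ⊆ ℝ^n be a closed convex cone, and let v* be the minimum-Euclidean-norm element of conv{α_1, …, α_ℓ} + N; assume v* ≠ 0. Let y* ∈ ℝ^n, let ε > 0, and for each j = 1, …, ℓ let P_j ⊆ ℝ^n be a set containing y* on which y* minimizes the linear function z ↦ ⟨α_j, z⟩, i.e., ⟨α_j, y*⟩ ≤ ⟨α_j, z⟩ for all z ∈ P_j. Then y* − ε v* ∉ P_j for every j = 1, …, ℓ. -/

import Mathlib

/-- Progress step in the proof of Theorem 1: if the minimum-norm element `v*` of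
`conv{α₁,…,α_ℓ} + N` is nonzero, then for any step size `ε > 0`, the point `y* − ε v*`
leaves every region `P_j` containing `y*` on which `y*` minimizes `z ↦ ⟨α_j, z⟩`. -/
theorem stmt_7 (n ℓ : ℕ) (hℓ : 1 ≤ ℓ) (α : Fin ℓ → EuclideanSpace ℝ (Fin n))
    (N : Set (EuclideanSpace ℝ (Fin n)))
    (hN0 : (0 : EuclideanSpace ℝ (Fin n)) ∈ N)
    (hNclosed : IsClosed N) (hNconvex : Convex ℝ N)
    (hNcone : ∀ t : ℝ, 0 ≤ t → ∀ ζ ∈ N, t • ζ ∈ N)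
    (S : Set (EuclideanSpace ℝ (Fin n)))
    (hS : S = {v | ∃ a ∈ convexHull ℝ (Set.range α), ∃ ζ ∈ N, v = a + ζ})
    (vstar : EuclideanSpace ℝ (Fin n))
    (hvS : vstar ∈ S) (hvmin : ∀ u ∈ S, ‖vstar‖ ≤ ‖u‖) (hvne : vstar ≠ 0)
    (ystar : EuclideanSpace ℝ (Fin n)) (ε : ℝ) (hε : 0 < ε)
    (P : Fin ℓ → Set (EuclideanSpace ℝ (Fin n)))
    (hyP : ∀ j, ystar ∈ P j)
    (hymin : ∀ j, ∀ z ∈ P j, (inner ℝ (α j) ystar : ℝ) ≤ (inner ℝ (α j) z : ℝ)) :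
    ∀ j : Fin ℓ, ystar - ε • vstar ∉ P j := by
  -- S is convex
  have hSconv : Convex ℝ S := by
    rw [hS]
    rintro x ⟨ax, hax, ζx, hζx, rfl⟩ y ⟨ay, hay, ζy, hζy, rfl⟩ a b ha hb hab
    refine ⟨a • ax + b • ay, (convex_convexHull ℝ _) hax hay ha hb hab,
      a • ζx + b • ζy, hNconvex hζx hζy ha hb hab, by module⟩
  -- variational inequality
  have key : ∀ u ∈ S, ‖vstar‖ ^ 2 ≤ (inner ℝ vstar u : ℝ) := by
    intro u hu
    by_contra hcon
    push_neg at hcon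
    set d := u - vstar with hd
    have hc : (inner ℝ vstar d : ℝ) < 0 := by
      simp only [hd, inner_sub_right, real_inner_self_eq_norm_sq]
      linarith
    have hdne : d ≠ 0 := by
      intro h; rw [h, inner_zero_right] at hc; linarith
    have hdpos : (0:ℝ) < ‖d‖ ^ 2 := pow_pos (norm_pos_iff.mpr hdne) 2
    set c := (inner ℝ vstar d : ℝ) with hcdef
    set t := min 1 (-c / ‖d‖ ^ 2) with ht
    have ht0 : 0 < t := by
      apply lt_min one_pos
      apply div_pos (by linarith) hdpos
    have ht1 : t ≤ 1 := min_le_left _ _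
    have htc : t * ‖d‖ ^ 2 ≤ -c := by
      have := min_le_right 1 (-c / ‖d‖ ^ 2)
      calc t * ‖d‖ ^ 2 ≤ (-c / ‖d‖ ^ 2) * ‖d‖ ^ 2 := by
            apply mul_le_mul_of_nonneg_right this (le_of_lt hdpos)
        _ = -c := by field_simp
    have hw : vstar + t • d ∈ S := by
      have := hSconv hvS hu (a := 1 - t) (b := t) (by linarith) (le_of_lt ht0) (by ring)
      have he : (1 - t) • vstar + t • u = vstar + t • d := by
        rw [hd]; module
      rwa [he] at this
    have hnorm := hvmin _ hw
    have hsq : ‖vstar‖ ^ 2 ≤ ‖vstar + t • d‖ ^ 2 := by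
      apply pow_le_pow_left₀ (norm_nonneg _) hnorm _
    rw [norm_add_sq_real, real_inner_smul_right, norm_smul] at hsq
    have : ‖vstar‖ ^ 2 + 2 * (t * c) + (|t| * ‖d‖) ^ 2 = ‖vstar‖ ^ 2 + t * (2 * c + t * ‖d‖ ^ 2) := by
      rw [abs_of_pos ht0]; ring
    rw [Real.norm_eq_abs] at hsq
    nlinarith [mul_pos ht0 (show (0:ℝ) < -c by linarith)]
  -- α j ∈ S
  intro j hmem
  have hαS : α j ∈ S := by
    rw [hS]
    exact ⟨α j, subset_convexHull ℝ _ ⟨j, rfl⟩, 0, hN0, by simp⟩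
  have h1 : ‖vstar‖ ^ 2 ≤ (inner ℝ vstar (α j) : ℝ) := key _ hαS
  have h2 := hymin j _ hmem
  rw [inner_sub_right, real_inner_smul_right] at h2
  have hpos : 0 < ‖vstar‖ ^ 2 := by
    have := norm_pos_iff.mpr hvne; positivity
  have : (inner ℝ (α j) vstar : ℝ) = (inner ℝ vstar (α j) : ℝ) := real_inner_comm _ _
  nlinarith
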